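/- For every integer s ≥ 0 and every g ∈ B, one has (L_s − 𝓛_s)(e^φ·g) = h_s·e^φ·g + ∑_{k=0}^{s} λ_k·e^φ·a_{s−k}(g) + e^φ·(L_s − 𝓛_s)(g), where 𝓛_s := h_s + D_s. Equivalently, the commutator satisfies [L_s − 𝓛_s, Φ] = h_s·Φ + ∑_{k=0}^{s} λ_k·Φ∘a_{s−k}, where Φ denotes multiplication by e^φ. -/

import Mathlib

/-!
STATEMENT 11.
Fix r ≥ 1 and ρ ∈ ℂ.  A := ℂ[x_1,x_2,…] (= `MvPolynomial ℕ ℂ`, variable `i`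
is x_{i+1}), B := A[[λ_1,…,λ_r]] (= `MvPowerSeries (Fin r) A`, variable
`n : Fin r` is λ_{n+1}).  For p ≥ 1, a_{−p} is multiplication by x_p and
a_p := p·∂/∂x_p (a_0 := 0), extended coefficientwise to B.
φ := ∑_{j=1}^r λ_j x_j/j and e^φ := ∑ φ^m/m! (computed by `expB`, exact on
series of positive λ-order).  For s ≥ 0,
  L_s := (1/2)·∑_{k=0}^{s} a_k·a_{s−k} + ∑_{p≥1} a_{−p}·a_{s+p} − ρ(s+1)·a_s
(the sum over p is locally finite; realized by `finsum`).  With λ_0 := 0,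
λ_ℓ := 0 for ℓ > r, h_s := (1/2)∑_{j=0}^{s} λ_j λ_{s−j} − ρ(s+1)λ_s and
D_s := ∑_{j=1}^{r−s} j·λ_{j+s}·∂/∂λ_j (coefficientwise in x), the claim is:
for every s ≥ 0 and g ∈ B,
  (L_s − 𝓛_s)(e^φ·g) = h_s·e^φ·g + ∑_{k=0}^{s} λ_k·e^φ·a_{s−k}(g)
                        + e^φ·(L_s − 𝓛_s)(g),
where 𝓛_s(g) := h_s·g + D_s(g).
-/

noncomputable section

abbrev A : Type := MvPolynomial ℕ ℂ
abbrev B (r : ℕ) : Type := MvPowerSeries (Fin r) A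

/-- `a_p := p ∂/∂x_p` on A (gives 0 at p = 0). -/
def aA (p : ℕ) (P : A) : A := ((p : ℂ)) • MvPolynomial.pderiv (p - 1) P

/-- Coefficientwise extension of `a_p` to B. -/
def aB (r : ℕ) (p : ℕ) (f : B r) : B r :=
  fun d => aA p (MvPowerSeries.coeff (R := A) d f)

/-- `L_s = (1/2)∑_{k=0}^{s} a_k a_{s−k} + ∑_{p≥1} a_{−p} a_{s+p} − ρ(s+1) a_s`
on A; the locally finite sum over p is a `finsum`. -/
def LA (ρ : ℂ) (s : ℕ) (P : A) : A :=
  (1 / 2 : ℂ) • (∑ k ∈ Finset.range (s + 1), aA k (aA (s - k) P))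
    + (∑ᶠ p : ℕ, if 1 ≤ p then MvPolynomial.X (p - 1) * aA (s + p) P else 0)
    - (ρ * ((s : ℂ) + 1)) • aA s P

/-- Coefficientwise extension of `L_s` to B. -/
def LB (r : ℕ) (ρ : ℂ) (s : ℕ) (f : B r) : B r :=
  fun d => LA ρ s (MvPowerSeries.coeff (R := A) d f)

/-- `λ_j` as an element of B: `λ_0 = 0`, `λ_j` is the j-th variable for
`1 ≤ j ≤ r`, and `λ_j = 0` for `j > r`. -/
def lamB (r : ℕ) (j : ℕ) : B r :=
  if h : 1 ≤ j ∧ j ≤ r then MvPowerSeries.X (⟨j - 1, by omega⟩ : Fin r) else 0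

/-- `h_s := (1/2)∑_{j=0}^{s} λ_j λ_{s−j} − ρ(s+1)λ_s`. -/
def hB (r : ℕ) (ρ : ℂ) (s : ℕ) : B r :=
  (1 / 2 : ℂ) • ∑ j ∈ Finset.range (s + 1), lamB r j * lamB r (s - j)
    - (ρ * ((s : ℂ) + 1)) • lamB r s

/-- `∂/∂λ_{n+1}` acting coefficientwise on B. -/
def dLam (r : ℕ) (n : Fin r) (f : B r) : B r :=
  fun d => ((d n + 1 : ℕ) : ℂ) • MvPowerSeries.coeff (R := A) (d + Finsupp.single n 1) f

/-- `D_s := ∑_{j=1}^{r−s} j λ_{j+s} ∂/∂λ_j` on B. -/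
def DB (r : ℕ) (s : ℕ) (f : B r) : B r :=
  ∑ j : Fin r,
    if h : (j : ℕ) + 1 + s ≤ r then
      (((j : ℕ) + 1 : ℕ) : ℂ) •
        (MvPowerSeries.X (⟨(j : ℕ) + s, by omega⟩ : Fin r) * dLam r j f)
    else 0

/-- `φ := ∑_{j=1}^r λ_j x_j / j`. -/
def phi (r : ℕ) : B r :=
  ∑ j : Fin r,
    MvPowerSeries.C (σ := Fin r) (R := A)
        (MvPolynomial.C (1 / (((j : ℕ) : ℂ) + 1)) * MvPolynomial.X (j : ℕ))
      * MvPowerSeries.X j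

/-- The exponential `∑_{m≥0} f^m/m!` of a series of positive λ-order. -/
def expB (r : ℕ) (f : B r) : B r :=
  fun d => ∑ m ∈ Finset.range (d.sum (fun _ k => k) + 1),
    ((m.factorial : ℂ))⁻¹ • MvPowerSeries.coeff (R := A) d (f ^ m)

/-! ### Auxiliary development -/

open MvPowerSeries Finset Finsupp

section Aux

variable {r : ℕ}

/-- degree in the λ variables -/
def degL (d : Fin r →₀ ℕ) : ℕ := d.sum fun _ k => k

lemma degL_add (u v : Fin r →₀ ℕ) : degL (u + v) = degL u + degL v := by
  classical
  exact Finsupp.sum_add_index' (fun _ => rfl) (fun _ _ _ => rfl)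

lemma degL_single (n : Fin r) (k : ℕ) : degL (Finsupp.single n k) = k := by
  classical
  exact Finsupp.sum_single_index rfl

lemma degL_eq_zero {d : Fin r →₀ ℕ} (h : degL d = 0) : d = 0 := by
  classical
  ext i
  by_contra hi
  have hmem : i ∈ d.support := Finsupp.mem_support_iff.2 hi
  have := (Finset.sum_eq_zero_iff (s := d.support) (f := fun i => d i)).1 h i hmem
  exact hi this

lemma degL_sub {e d : Fin r →₀ ℕ} (h : e ≤ d) : degL (d - e) = degL d - degL e := by
  have h1 : d - e + e = d := tsub_add_cancel_of_le h
  have h2 := degL_add (d - e) e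
  rw [h1] at h2
  omega

/-! #### aA lemmas -/

lemma aA_zeroP (p : ℕ) : aA p (0 : A) = 0 := by simp [aA]

lemma aA_add (p : ℕ) (P Q : A) : aA p (P + Q) = aA p P + aA p Q := by
  simp [aA, map_add, smul_add]

lemma aA_smul (p : ℕ) (c : ℂ) (P : A) : aA p (c • P) = c • aA p P := by
  simp [aA, map_smul, smul_comm c]

lemma aA_sum (p : ℕ) {ι : Type*} (t : Finset ι) (F : ι → A) :
    aA p (∑ i ∈ t, F i) = ∑ i ∈ t, aA p (F i) := by
  simp [aA, map_sum, Finset.smul_sum]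

lemma aA_mul (p : ℕ) (P Q : A) : aA p (P * Q) = aA p P * Q + P * aA p Q := by
  simp only [aA, MvPolynomial.pderiv_mul, smul_add, smul_mul_assoc, mul_smul_comm]

lemma aA_one (p : ℕ) : aA p (1 : A) = 0 := by
  simp [aA]

lemma aA_vanish {P : A} {q : ℕ} (h : P.vars.sup id + 1 < q) : aA q P = 0 := by
  have hq : q - 1 ∉ P.vars := by
    intro hm
    have := Finset.le_sup (f := id) hm
    simp only [id] at this
    omega
  simp [aA, MvPolynomial.pderiv_eq_zero_of_notMem_vars hq]

/-! #### coefficients -/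

lemma coeff_app (d : Fin r →₀ ℕ) (f : B r) : MvPowerSeries.coeff (R := A) d f = f d := rfl

lemma coeff_aB (p : ℕ) (d : Fin r →₀ ℕ) (f : B r) :
    MvPowerSeries.coeff (R := A) d (aB r p f) = aA p (MvPowerSeries.coeff (R := A) d f) := rfl

lemma coeff_dLam (n : Fin r) (d : Fin r →₀ ℕ) (f : B r) :
    MvPowerSeries.coeff (R := A) d (dLam r n f) =
      ((d n + 1 : ℕ) : ℂ) • MvPowerSeries.coeff (R := A) (d + Finsupp.single n 1) f := rfl

lemma coeff_csmul (c : ℂ) (d : Fin r →₀ ℕ) (f : B r) :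
    MvPowerSeries.coeff (R := A) d (c • f) = c • MvPowerSeries.coeff (R := A) d f := rfl

lemma lamB_eq_zero {q : ℕ} (h : r < q) : lamB r q = 0 := by
  rw [lamB, dif_neg]; omega

lemma aB_add (p : ℕ) (f g : B r) : aB r p (f + g) = aB r p f + aB r p g := by
  apply MvPowerSeries.ext; intro d
  simp [coeff_aB, map_add, aA_add]

lemma aB_mul (p : ℕ) (f g : B r) : aB r p (f * g) = aB r p f * g + f * aB r p g := by
  classical
  apply MvPowerSeries.ext; intro d
  rw [map_add, coeff_aB, coeff_mul, coeff_mul, coeff_mul, aA_sum, ← Finset.sum_add_distrib]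
  refine Finset.sum_congr rfl fun p hp => ?_
  rw [aA_mul, coeff_aB, coeff_aB]

lemma aB_lamB (p q : ℕ) : aB r p (lamB r q) = 0 := by
  classical
  apply MvPowerSeries.ext; intro d
  rw [coeff_aB, map_zero]
  rcases eq_or_ne (lamB r q) 0 with h | h
  · rw [h, map_zero, aA_zeroP]
  · rw [lamB] at h ⊢
    rw [dif_pos (by by_contra hc; exact h (dif_neg hc))]
    rw [MvPowerSeries.coeff_X]
    split <;> simp [aA_one, aA_zeroP]

lemma aB_lamB_mul (p q : ℕ) (f : B r) :
    aB r p (lamB r q * f) = lamB r q * aB r p f := by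
  rw [aB_mul, aB_lamB, zero_mul, zero_add]

/-! #### phi and expB -/

lemma coeff_phi_ne {v : Fin r →₀ ℕ} (hv : degL v ≠ 1) :
    MvPowerSeries.coeff (R := A) v (phi r) = 0 := by
  classical
  rw [phi, map_sum]
  refine Finset.sum_eq_zero fun j _ => ?_
  rw [MvPowerSeries.coeff_C_mul, MvPowerSeries.coeff_X]
  rw [if_neg, mul_zero]
  intro hveq
  exact hv (by rw [hveq, degL_single])

lemma degL_zero : degL (0 : Fin r →₀ ℕ) = 0 := by simp [degL]

lemma coeff_phi_pow_ne {m : ℕ} : ∀ {d : Fin r →₀ ℕ}, degL d ≠ m →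
    MvPowerSeries.coeff (R := A) d (phi r ^ m) = 0 := by
  classical
  induction m with
  | zero =>
    intro d hd
    rw [pow_zero, MvPowerSeries.coeff_one, if_neg]
    intro h0
    exact hd (by rw [h0, degL_zero])
  | succ m ih =>
    intro d hd
    rw [pow_succ, MvPowerSeries.coeff_mul]
    refine Finset.sum_eq_zero fun p hp => ?_
    rw [Finset.HasAntidiagonal.mem_antidiagonal] at hp
    rcases eq_or_ne (degL p.1) m with h1 | h1
    · have h2 : degL p.2 ≠ 1 := by
        have h3 := degL_add p.1 p.2
        rw [hp] at h3
        omega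
      rw [coeff_phi_ne h2, mul_zero]
    · rw [ih h1, zero_mul]

lemma expB_coeff (d : Fin r →₀ ℕ) :
    expB r (phi r) d = (((degL d).factorial : ℂ))⁻¹ •
      MvPowerSeries.coeff (R := A) d (phi r ^ (degL d)) := by
  rw [expB]
  exact Finset.sum_eq_single_of_mem (degL d) (Finset.self_mem_range_succ _)
    fun m _ hne => by rw [coeff_phi_pow_ne (Ne.symm hne), smul_zero]

def cP (j : ℕ) : A := MvPolynomial.C (1 / ((j : ℂ) + 1)) * MvPolynomial.X j

lemma aA_cP (q j : ℕ) : aA q (cP j) = if q = j + 1 then 1 else 0 := by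
  rcases Nat.eq_zero_or_pos q with hq | hq
  · subst hq
    simp [aA]
  by_cases hqj : q = j + 1
  · subst hqj
    rw [if_pos rfl, aA, cP]
    have hd : j + 1 - 1 = j := by omega
    rw [hd, MvPolynomial.pderiv_C_mul, MvPolynomial.pderiv_X_self, mul_one,
      MvPolynomial.smul_eq_C_mul, ← MvPolynomial.C_mul]
    rw [show ((((j : ℕ) + 1 : ℕ) : ℂ)) * (1 / ((j : ℂ) + 1)) = 1 by
      push_cast
      rw [mul_one_div, div_self (Nat.cast_add_one_ne_zero j)]]
    exact MvPolynomial.C_1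
  · rw [if_neg hqj, aA, cP, MvPolynomial.pderiv_C_mul,
      MvPolynomial.pderiv_X_of_ne (by omega), mul_zero, smul_zero]

lemma coeff_phi (d : Fin r →₀ ℕ) :
    MvPowerSeries.coeff (R := A) d (phi r) =
      ∑ j : Fin r, if d = Finsupp.single j 1 then cP (j : ℕ) else 0 := by
  classical
  rw [phi, map_sum]
  refine Finset.sum_congr rfl fun j _ => ?_
  rw [MvPowerSeries.coeff_C_mul, MvPowerSeries.coeff_X]
  split <;> simp [cP]

lemma aB_phi (q : ℕ) : aB r q (phi r) = lamB r q := by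
  classical
  apply MvPowerSeries.ext; intro d
  rw [coeff_aB, coeff_phi, aA_sum]
  by_cases hq : 1 ≤ q ∧ q ≤ r
  · set j0 : Fin r := ⟨q - 1, by omega⟩ with hj0
    rw [lamB, dif_pos hq, MvPowerSeries.coeff_X]
    rw [Finset.sum_eq_single j0]
    · have hcq : q = (j0 : ℕ) + 1 := by simp [hj0]; omega
      split
      · rw [aA_cP, if_pos hcq]
      · exact aA_zeroP q
    · intro j _ hj
      split
      · rw [aA_cP, if_neg]
        intro hcq
        exact hj (Fin.ext (by simp [hj0]; omega))
      · exact aA_zeroP q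
    · intro h
      exact absurd (Finset.mem_univ j0) h
  · rw [lamB, dif_neg hq, map_zero]
    refine Finset.sum_eq_zero fun j _ => ?_
    split
    · rw [aA_cP, if_neg (by have := j.isLt; omega)]
    · exact aA_zeroP q

lemma aB_phi_pow (q : ℕ) : ∀ m : ℕ,
    aB r q (phi r ^ (m + 1)) = ((m + 1 : ℕ) : ℂ) • (lamB r q * phi r ^ m) := by
  intro m
  induction m with
  | zero => simp [aB_phi]
  | succ m ih =>
    rw [pow_succ, aB_mul, ih, aB_phi]
    have hc : ((m + 1 + 1 : ℕ) : ℂ) = ((m + 1 : ℕ) : ℂ) + 1 := by push_cast; ring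
    rw [hc, add_smul, one_smul]
    simp only [smul_mul_assoc]
    congr 1
    · congr 1
      ring
    · ring

lemma coeff_X_mul' (i : Fin r) (f : B r) (d : Fin r →₀ ℕ) :
    MvPowerSeries.coeff (R := A) d (MvPowerSeries.X i * f) =
      if Finsupp.single i 1 ≤ d then
        MvPowerSeries.coeff (R := A) (d - Finsupp.single i 1) f else 0 := by
  classical
  rw [MvPowerSeries.X_def, MvPowerSeries.coeff_monomial_mul]
  split <;> simp

lemma aB_expB (q : ℕ) : aB r q (expB r (phi r)) = lamB r q * expB r (phi r) := by
  classical
  apply MvPowerSeries.ext; intro d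
  rw [coeff_aB, coeff_app, expB_coeff, aA_smul]
  rcases Nat.eq_zero_or_pos (degL d) with h0 | hpos
  · have hd0 : d = 0 := degL_eq_zero h0
    subst hd0
    rw [h0, pow_zero, MvPowerSeries.coeff_one, if_pos rfl, aA_one, smul_zero]
    rw [lamB]
    split
    · exact (MvPowerSeries.coeff_zero_X_mul _ _).symm
    · rw [zero_mul, map_zero]
  · obtain ⟨M, hM⟩ : ∃ M, degL d = M + 1 := ⟨degL d - 1, by omega⟩
    rw [hM]
    have step : aA q (MvPowerSeries.coeff (R := A) d (phi r ^ (M + 1)))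
        = MvPowerSeries.coeff (R := A) d (((M + 1 : ℕ) : ℂ) • (lamB r q * phi r ^ M)) := by
      rw [← coeff_aB, aB_phi_pow]
    rw [step, coeff_csmul, smul_smul]
    have hsc : ((M + 1).factorial : ℂ)⁻¹ * ((M + 1 : ℕ) : ℂ) = ((M.factorial : ℂ))⁻¹ := by
      rw [Nat.factorial_succ]
      push_cast
      rw [mul_inv]
      rw [mul_comm ((M : ℂ) + 1)⁻¹ _, mul_assoc,
        inv_mul_cancel₀ (Nat.cast_add_one_ne_zero M), mul_one]
    rw [hsc]
    rw [lamB]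
    split
    · rw [coeff_X_mul', coeff_X_mul']
      split
      · rename_i hcond hle
        have hdeg : degL (d - Finsupp.single (⟨q - 1, by omega⟩ : Fin r) 1) = M := by
          rw [degL_sub hle, degL_single, hM]
          omega
        conv_rhs => rw [coeff_app]
        rw [expB_coeff, hdeg]
      · rw [smul_zero]
    · rw [zero_mul, map_zero, zero_mul, map_zero, smul_zero]

lemma dLam_mul (n : Fin r) (f g : B r) :
    dLam r n (f * g) = dLam r n f * g + f * dLam r n g := by
  classical
  apply MvPowerSeries.ext; intro d
  set e : Fin r →₀ ℕ := Finsupp.single n 1 with he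
  rw [map_add, coeff_dLam, MvPowerSeries.coeff_mul, MvPowerSeries.coeff_mul,
    MvPowerSeries.coeff_mul, Finset.smul_sum]
  have hsplit : ∀ p ∈ Finset.HasAntidiagonal.antidiagonal (d + e),
      ((d n + 1 : ℕ) : ℂ) • (MvPowerSeries.coeff (R := A) p.1 f * MvPowerSeries.coeff (R := A) p.2 g)
        = ((p.1 n : ℕ) : ℂ) • (MvPowerSeries.coeff (R := A) p.1 f * MvPowerSeries.coeff (R := A) p.2 g)
          + ((p.2 n : ℕ) : ℂ) • (MvPowerSeries.coeff (R := A) p.1 f * MvPowerSeries.coeff (R := A) p.2 g) := by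
    intro p hp
    rw [Finset.HasAntidiagonal.mem_antidiagonal] at hp
    have hpn : p.1 n + p.2 n = d n + 1 := by
      have h1 := DFunLike.congr_fun hp n
      simpa [he, Finsupp.add_apply, Finsupp.single_eq_same] using h1
    rw [← add_smul]
    norm_cast
    rw [hpn]
  rw [Finset.sum_congr rfl hsplit, Finset.sum_add_distrib]
  congr 1
  · -- ∑ over anti (d+e) of (p.1 n) • term = ∑ over anti d of coeff (dLam f) * coeff g
    rw [← Finset.sum_filter_of_ne (p := fun p => p.1 n ≠ 0)
      (fun p _ hp => by
        intro h0
        rw [h0] at hp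
        simp at hp)]
    refine Finset.sum_nbij' (fun p => (p.1 - e, p.2)) (fun q => (q.1 + e, q.2))
      ?_ ?_ ?_ ?_ ?_
    · intro p hp
      rw [Finset.mem_filter, Finset.HasAntidiagonal.mem_antidiagonal] at hp
      obtain ⟨hps, hpn⟩ := hp
      rw [Finset.HasAntidiagonal.mem_antidiagonal]
      have hle : e ≤ p.1 := by
        rw [he, Finsupp.single_le_iff]
        omega
      have : p.1 - e + e = p.1 := tsub_add_cancel_of_le hle
      have h2 : p.1 - e + p.2 + e = d + e := by
        rw [add_right_comm, this, hps]
      exact add_right_cancel h2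
    · intro q hq
      rw [Finset.HasAntidiagonal.mem_antidiagonal] at hq
      rw [Finset.mem_filter, Finset.HasAntidiagonal.mem_antidiagonal]
      constructor
      · rw [add_right_comm, hq]
      · simp [he, Finsupp.add_apply, Finsupp.single_eq_same]
    · intro p hp
      rw [Finset.mem_filter, Finset.HasAntidiagonal.mem_antidiagonal] at hp
      have hle : e ≤ p.1 := by
        rw [he, Finsupp.single_le_iff]
        omega
      dsimp only
      rw [tsub_add_cancel_of_le hle]
    · intro q _
      dsimp only
      rw [add_tsub_cancel_right]
    · intro p hp
      rw [Finset.mem_filter, Finset.HasAntidiagonal.mem_antidiagonal] at hp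
      obtain ⟨hps, hpn⟩ := hp
      have hle : e ≤ p.1 := by
        rw [he, Finsupp.single_le_iff]
        omega
      rw [coeff_dLam, tsub_add_cancel_of_le hle, smul_mul_assoc]
      congr 2
      rw [he, Finsupp.tsub_apply, Finsupp.single_eq_same]
      omega
  · rw [← Finset.sum_filter_of_ne (p := fun p => p.2 n ≠ 0)
      (fun p _ hp => by
        intro h0
        rw [h0] at hp
        simp at hp)]
    refine Finset.sum_nbij' (fun p => (p.1, p.2 - e)) (fun q => (q.1, q.2 + e))
      ?_ ?_ ?_ ?_ ?_
    · intro p hp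
      rw [Finset.mem_filter, Finset.HasAntidiagonal.mem_antidiagonal] at hp
      obtain ⟨hps, hpn⟩ := hp
      rw [Finset.HasAntidiagonal.mem_antidiagonal]
      have hle : e ≤ p.2 := by
        rw [he, Finsupp.single_le_iff]
        omega
      have h1 : p.2 - e + e = p.2 := tsub_add_cancel_of_le hle
      have h2 : p.1 + (p.2 - e) + e = d + e := by
        rw [add_assoc, h1, hps]
      exact add_right_cancel h2
    · intro q hq
      rw [Finset.HasAntidiagonal.mem_antidiagonal] at hq
      rw [Finset.mem_filter, Finset.HasAntidiagonal.mem_antidiagonal]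
      constructor
      · rw [← add_assoc, hq]
      · simp [he, Finsupp.add_apply, Finsupp.single_eq_same]
    · intro p hp
      rw [Finset.mem_filter, Finset.HasAntidiagonal.mem_antidiagonal] at hp
      have hle : e ≤ p.2 := by
        rw [he, Finsupp.single_le_iff]
        omega
      dsimp only
      rw [tsub_add_cancel_of_le hle]
    · intro q _
      dsimp only
      rw [add_tsub_cancel_right]
    · intro p hp
      rw [Finset.mem_filter, Finset.HasAntidiagonal.mem_antidiagonal] at hp
      obtain ⟨hps, hpn⟩ := hp
      have hle : e ≤ p.2 := by
        rw [he, Finsupp.single_le_iff]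
        omega
      rw [coeff_dLam, tsub_add_cancel_of_le hle, mul_smul_comm]
      congr 2
      rw [he, Finsupp.tsub_apply, Finsupp.single_eq_same]
      omega

lemma dLam_phi (n : Fin r) : dLam r n (phi r) = MvPowerSeries.C (σ := Fin r) (R := A) (cP (n : ℕ)) := by
  classical
  apply MvPowerSeries.ext; intro d
  rw [coeff_dLam, MvPowerSeries.coeff_C, coeff_phi]
  by_cases hd : d = 0
  · subst hd
    rw [if_pos rfl]
    simp only [Finsupp.coe_zero, Pi.zero_apply, Nat.cast_ofNat, zero_add, Nat.cast_one, one_smul]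
    rw [Finset.sum_eq_single n]
    · rw [if_pos rfl]
    · intro j _ hj
      rw [if_neg]
      intro heq
      have h1 := DFunLike.congr_fun heq n
      rw [Finsupp.single_eq_same, Finsupp.single_eq_of_ne' hj] at h1
      exact one_ne_zero h1
    · intro h
      exact absurd (Finset.mem_univ n) h
  · rw [if_neg hd]
    rw [Finset.sum_eq_zero, smul_zero]
    intro j _
    rw [if_neg]
    intro heq
    apply hd
    have hdeg : degL (d + Finsupp.single n 1) = 1 := by rw [heq, degL_single]
    rw [degL_add, degL_single] at hdeg
    exact degL_eq_zero (by omega)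

lemma dLam_phi_pow (n : Fin r) (m : ℕ) :
    dLam r n (phi r ^ (m + 1)) =
      ((m + 1 : ℕ) : ℂ) • (MvPowerSeries.C (σ := Fin r) (R := A) (cP (n : ℕ)) * phi r ^ m) := by
  induction m with
  | zero => simp [dLam_phi]
  | succ m ih =>
    rw [pow_succ, dLam_mul, ih, dLam_phi]
    have hc : ((m + 1 + 1 : ℕ) : ℂ) = ((m + 1 : ℕ) : ℂ) + 1 := by push_cast; ring
    rw [hc, add_smul, one_smul]
    simp only [smul_mul_assoc]
    rw [mul_assoc, ← pow_succ, mul_comm (phi r ^ (m + 1))]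

lemma dLam_expB (n : Fin r) :
    dLam r n (expB r (phi r)) = MvPowerSeries.C (σ := Fin r) (R := A) (cP (n : ℕ)) * expB r (phi r) := by
  classical
  apply MvPowerSeries.ext; intro d
  rw [coeff_dLam, MvPowerSeries.coeff_C_mul]
  conv_lhs => rw [coeff_app, expB_coeff]
  conv_rhs => rw [coeff_app, expB_coeff]
  have hdeg : degL (d + Finsupp.single n 1) = degL d + 1 := by
    rw [degL_add, degL_single]
  rw [hdeg]
  have key : ((d n + 1 : ℕ) : ℂ) • MvPowerSeries.coeff (R := A) (d + Finsupp.single n 1)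
        (phi r ^ (degL d + 1))
      = MvPowerSeries.coeff (R := A) d (dLam r n (phi r ^ (degL d + 1))) := rfl
  rw [smul_comm, key, dLam_phi_pow, coeff_csmul, MvPowerSeries.coeff_C_mul, smul_smul,
    mul_smul_comm]
  congr 1
  rw [Nat.factorial_succ]
  push_cast
  rw [mul_inv, mul_comm ((degL d : ℂ) + 1)⁻¹ _, mul_assoc,
    inv_mul_cancel₀ (Nat.cast_add_one_ne_zero (degL d)), mul_one]

/-! #### the cross term -/

def TT (r s : ℕ) : B r :=
  ∑ j : Fin r,
    if h : (j : ℕ) + 1 + s ≤ r then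
      MvPowerSeries.C (σ := Fin r) (R := A) (MvPolynomial.X (j : ℕ)) *
        MvPowerSeries.X (⟨(j : ℕ) + s, by omega⟩ : Fin r)
    else 0

lemma smul_CB (c : ℂ) (a : A) :
    c • MvPowerSeries.C (σ := Fin r) (R := A) a = MvPowerSeries.C (σ := Fin r) (R := A) (c • a) := by
  classical
  apply MvPowerSeries.ext; intro d
  rw [coeff_csmul, MvPowerSeries.coeff_C, MvPowerSeries.coeff_C]
  split <;> simp

lemma DB_exp (s : ℕ) (f : B r) :
    DB r s (expB r (phi r) * f) =
      TT r s * (expB r (phi r) * f) + expB r (phi r) * DB r s f := by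
  classical
  rw [DB, DB, TT, Finset.sum_mul, Finset.mul_sum, ← Finset.sum_add_distrib]
  refine Finset.sum_congr rfl fun j _ => ?_
  by_cases h : (j : ℕ) + 1 + s ≤ r
  · rw [dif_pos h, dif_pos h, dif_pos h, dLam_mul, dLam_expB]
    have hsm : MvPowerSeries.C (σ := Fin r) (R := A) (MvPolynomial.X (j : ℕ))
        = (((j : ℕ) + 1 : ℕ) : ℂ) • MvPowerSeries.C (σ := Fin r) (R := A) (cP (j : ℕ)) := by
      rw [smul_CB]
      congr 1
      rw [cP, MvPolynomial.smul_eq_C_mul, ← mul_assoc, ← MvPolynomial.C_mul]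
      rw [show (((j : ℕ) + 1 : ℕ) : ℂ) * (1 / ((j : ℂ) + 1)) = 1 by
        push_cast
        rw [mul_one_div, div_self (Nat.cast_add_one_ne_zero (j : ℕ))]]
      rw [MvPolynomial.C_1, one_mul]
    rw [hsm, mul_smul_comm, smul_mul_assoc, smul_mul_assoc, ← smul_add]
    congr 1
    ring
  · rw [dif_neg h, dif_neg h, dif_neg h]
    rw [zero_mul, mul_zero, add_zero]

/-! #### truncated L -/

def LBt (r N : ℕ) (ρ : ℂ) (s : ℕ) (f : B r) : B r :=
  (1 / 2 : ℂ) • (∑ k ∈ Finset.range (s + 1), aB r k (aB r (s - k) f))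
    + (∑ i ∈ Finset.range N, MvPowerSeries.C (σ := Fin r) (R := A) (MvPolynomial.X i) * aB r (s + i + 1) f)
    - (ρ * ((s : ℂ) + 1)) • aB r s f

lemma LA_trunc {N : ℕ} {s : ℕ} (ρ : ℂ) {P : A} (hP : ∀ p, N < p → aA (s + p) P = 0) :
    LA ρ s P =
      (1 / 2 : ℂ) • (∑ k ∈ Finset.range (s + 1), aA k (aA (s - k) P))
        + (∑ i ∈ Finset.range N, MvPolynomial.X i * aA (s + i + 1) P)
        - (ρ * ((s : ℂ) + 1)) • aA s P := by
  rw [LA]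
  congr 1
  congr 1
  have hmid : (Function.support fun p : ℕ =>
      if 1 ≤ p then MvPolynomial.X (p - 1) * aA (s + p) P else 0) ⊆ ↑(Finset.Icc 1 N) := by
    intro p hp
    simp only [Function.mem_support] at hp
    rw [Finset.coe_Icc, Set.mem_Icc]
    constructor
    · by_contra h0
      have hp0 : p = 0 := by omega
      subst hp0
      simp at hp
    · by_contra h1
      push_neg at h1
      rw [if_pos (by omega), hP p (by omega), mul_zero] at hp
      exact hp rfl
  rw [finsum_eq_sum_of_support_subset _ hmid, ← Finset.Ico_add_one_right_eq_Icc,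
    Finset.sum_Ico_eq_sum_range]
  rw [Nat.add_sub_cancel]
  refine Finset.sum_congr rfl fun i _ => ?_
  rw [if_pos (by omega)]
  have e1 : 1 + i - 1 = i := by omega
  have e2 : s + (1 + i) = s + i + 1 := by omega
  rw [e1, e2]

lemma coeff_LBt {N : ℕ} (ρ : ℂ) (s : ℕ) (d : Fin r →₀ ℕ) (f : B r) :
    MvPowerSeries.coeff (R := A) d (LBt r N ρ s f) =
      (1 / 2 : ℂ) • (∑ k ∈ Finset.range (s + 1), aA k (aA (s - k) (MvPowerSeries.coeff (R := A) d f)))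
        + (∑ i ∈ Finset.range N, MvPolynomial.X i * aA (s + i + 1) (MvPowerSeries.coeff (R := A) d f))
        - (ρ * ((s : ℂ) + 1)) • aA s (MvPowerSeries.coeff (R := A) d f) := by
  rw [LBt]
  simp only [map_sub, map_add, coeff_csmul, map_sum, MvPowerSeries.coeff_C_mul, coeff_aB]

lemma LBt_exp {N : ℕ} (hN : r ≤ N) (ρ : ℂ) (s : ℕ) (g : B r) :
    LBt r N ρ s (expB r (phi r) * g) =
      hB r ρ s * (expB r (phi r) * g) + TT r s * (expB r (phi r) * g)
        + (∑ k ∈ Finset.range (s + 1), lamB r k * (expB r (phi r) * aB r (s - k) g))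
        + expB r (phi r) * LBt r N ρ s g := by
  classical
  have hq : ∀ (q : ℕ) (f : B r), aB r q (expB r (phi r) * f)
      = lamB r q * (expB r (phi r) * f) + expB r (phi r) * aB r q f := by
    intro q f
    rw [aB_mul, aB_expB, mul_assoc]
  have hk : ∀ k ∈ Finset.range (s + 1), aB r k (aB r (s - k) (expB r (phi r) * g)) =
      (lamB r k * lamB r (s - k)) * (expB r (phi r) * g)
        + (lamB r (s - k) * (expB r (phi r) * aB r k g)
            + lamB r k * (expB r (phi r) * aB r (s - k) g))
        + expB r (phi r) * aB r k (aB r (s - k) g) := by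
    intro k _
    rw [hq (s - k) g, aB_add, aB_lamB_mul, hq k g, hq k (aB r (s - k) g)]
    ring
  rw [LBt, Finset.sum_congr rfl hk, Finset.sum_add_distrib, Finset.sum_add_distrib,
    Finset.sum_add_distrib]
  have h2 : (∑ k ∈ Finset.range (s + 1), lamB r (s - k) * (expB r (phi r) * aB r k g))
      = ∑ k ∈ Finset.range (s + 1), lamB r k * (expB r (phi r) * aB r (s - k) g) := by
    rw [← Finset.sum_range_reflect
      (fun k => lamB r (s - k) * (expB r (phi r) * aB r k g)) (s + 1)]
    refine Finset.sum_congr rfl fun k hk2 => ?_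
    rw [Finset.mem_range] at hk2
    have h3 : s + 1 - 1 - k = s - k := by omega
    have h4 : s - (s - k) = k := by omega
    rw [h3, h4]
  have h7sum : (∑ i ∈ Finset.range N,
        MvPowerSeries.C (σ := Fin r) (R := A) (MvPolynomial.X i) * lamB r (s + i + 1)) = TT r s := by
    have hz : ∀ i ∈ Finset.range N, i ∉ Finset.range r →
        MvPowerSeries.C (σ := Fin r) (R := A) (MvPolynomial.X i) * lamB r (s + i + 1) = 0 := by
      intro i _ hi
      rw [Finset.mem_range, not_lt] at hi
      rw [lamB_eq_zero (by omega), mul_zero]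
    rw [← Finset.sum_subset (Finset.range_subset_range.2 hN) hz, Finset.sum_range, TT]
    refine Finset.sum_congr rfl fun j _ => ?_
    by_cases hc : (j : ℕ) + 1 + s ≤ r
    · rw [dif_pos hc, lamB, dif_pos ⟨by omega, by omega⟩]
      exact congrArg _ (congrArg _ (Fin.mk_eq_mk.mpr (by omega)))
    · rw [dif_neg hc, lamB, dif_neg (by omega), mul_zero]
  have h6 : ∀ i ∈ Finset.range N,
      MvPowerSeries.C (σ := Fin r) (R := A) (MvPolynomial.X i) * aB r (s + i + 1) (expB r (phi r) * g)
      = (MvPowerSeries.C (σ := Fin r) (R := A) (MvPolynomial.X i) * lamB r (s + i + 1))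
            * (expB r (phi r) * g)
        + expB r (phi r)
            * (MvPowerSeries.C (σ := Fin r) (R := A) (MvPolynomial.X i) * aB r (s + i + 1) g) := by
    intro i _
    rw [hq]
    ring
  rw [Finset.sum_congr rfl h6, Finset.sum_add_distrib, ← Finset.sum_mul, ← Finset.sum_mul,
    h7sum, ← Finset.mul_sum, ← Finset.mul_sum, hq s g, h2, hB, LBt]
  simp only [smul_add]
  rw [← add_smul]
  norm_num
  simp only [Algebra.smul_def, smul_sub, sub_mul, mul_add, mul_sub]
  ring

set_option maxHeartbeats 1000000 in
lemma main1 (ρ : ℂ) (s : ℕ) (g : B r) :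
    LB r ρ s (expB r (phi r) * g) =
      hB r ρ s * (expB r (phi r) * g) + TT r s * (expB r (phi r) * g)
        + (∑ k ∈ Finset.range (s + 1), lamB r k * (expB r (phi r) * aB r (s - k) g))
        + expB r (phi r) * LB r ρ s g := by
  classical
  apply MvPowerSeries.ext; intro d
  set N : ℕ := max r ((Finset.Iic d).sup
    fun v => (MvPowerSeries.coeff (R := A) v g).vars.sup id + 1) with hNdef
  have hNr : r ≤ N := le_max_left _ _
  have hii : ∀ v : Fin r →₀ ℕ, v ≤ d → ∀ p, N < p →
      aA (s + p) (MvPowerSeries.coeff (R := A) v g) = 0 := by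
    intro v hv p hp
    apply aA_vanish
    have h1 : (MvPowerSeries.coeff (R := A) v g).vars.sup id + 1 ≤ N := by
      refine le_trans ?_ (le_max_right _ _)
      exact Finset.le_sup (f := fun v => (MvPowerSeries.coeff (R := A) v g).vars.sup id + 1)
        (Finset.mem_Iic.2 hv)
    omega
  have hEzero : ∀ (q : ℕ), r < q → ∀ u : Fin r →₀ ℕ,
      aA q (MvPowerSeries.coeff (R := A) u (expB r (phi r))) = 0 := by
    intro q hq u
    have h1 : aA q (MvPowerSeries.coeff (R := A) u (expB r (phi r)))
        = MvPowerSeries.coeff (R := A) u (aB r q (expB r (phi r))) := rfl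
    rw [h1, aB_expB, lamB_eq_zero hq, zero_mul, map_zero]
  have hi : ∀ p, N < p → aA (s + p) (MvPowerSeries.coeff (R := A) d (expB r (phi r) * g)) = 0 := by
    intro p hp
    rw [MvPowerSeries.coeff_mul, aA_sum]
    refine Finset.sum_eq_zero fun q hq => ?_
    rw [Finset.HasAntidiagonal.mem_antidiagonal] at hq
    rw [aA_mul, hEzero (s + p) (by omega) q.1, zero_mul, zero_add,
      hii q.2 (hq ▸ le_add_self) p hp, mul_zero]
  have e1 : MvPowerSeries.coeff (R := A) d (LB r ρ s (expB r (phi r) * g))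
      = MvPowerSeries.coeff (R := A) d (LBt r N ρ s (expB r (phi r) * g)) := by
    rw [coeff_LBt]
    exact LA_trunc ρ hi
  rw [e1, LBt_exp hNr]
  rw [map_add, map_add, map_add, map_add, map_add, map_add]
  congr 1
  rw [MvPowerSeries.coeff_mul, MvPowerSeries.coeff_mul]
  refine Finset.sum_congr rfl fun q hq => ?_
  rw [Finset.HasAntidiagonal.mem_antidiagonal] at hq
  congr 1
  rw [coeff_LBt]
  exact (LA_trunc ρ (fun p hp => hii q.2 (hq ▸ le_add_self) p hp)).symm

end Aux

theorem statement11 (r : ℕ) (hr : 1 ≤ r) (ρ : ℂ) (s : ℕ) (g : B r) :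
    LB r ρ s (expB r (phi r) * g)
        - (hB r ρ s * (expB r (phi r) * g) + DB r s (expB r (phi r) * g))
      = hB r ρ s * (expB r (phi r) * g)
        + (∑ k ∈ Finset.range (s + 1), lamB r k * (expB r (phi r) * aB r (s - k) g))
        + expB r (phi r) * (LB r ρ s g - (hB r ρ s * g + DB r s g)) := by
  rw [DB_exp, main1]
  ring

end
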